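/- A social ranking solution R satisfies neutrality (NT), weak coalitional anonymity (WCA), the weak union very important person property (WUVIP), top-aligned consistency (TCON), and tops-only (TO) if and only if R equals the plurality solution R^P. -/

import Mathlib

namespace SocRank

/-- A coalitional ranking (a weak order on a set of feasible nonempty coalitions),
represented by its list of equivalence classes, listed from best to worst. -/
structure CoalRanking (X : Type*) where
  classes : List (Finset (Finset X))
  class_nonempty : ∀ C ∈ classes, C.Nonempty
  coal_nonempty : ∀ C ∈ classes, ∀ S ∈ C, S.Nonempty
  classes_disjoint : classes.Pairwise Disjoint

namespace CoalRanking

variable {X : Type*}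

/-- The coalition domain `𝒟(≿)` of a coalitional ranking. -/
def domain [DecidableEq X] (r : CoalRanking X) : Finset (Finset X) :=
  r.classes.foldr (· ∪ ·) ∅

/-- The list of equivalence classes of the restriction of a ranking to a set `D`
of coalitions. -/
def restrictClasses [DecidableEq X] (r : CoalRanking X) (D : Finset (Finset X)) :
    List (Finset (Finset X)) :=
  (r.classes.map (· ∩ D)).filter (fun C => decide C.Nonempty)

/-- Merging two lists of equivalence classes by aligning them at the top. -/
def zipUnion [DecidableEq X] :
    List (Finset (Finset X)) → List (Finset (Finset X)) → List (Finset (Finset X))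
  | [], M => M
  | L, [] => L
  | A :: L, B :: M => (A ∪ B) :: zipUnion L M

/-- `r` is a sum of the disjoint rankings `r₁` and `r₂`: its domain is the union of
the two domains and its restriction to the domain of `rᵢ` is `rᵢ`. -/
def IsSum [DecidableEq X] (r r₁ r₂ : CoalRanking X) : Prop :=
  Disjoint r₁.domain r₂.domain ∧
  r.domain = r₁.domain ∪ r₂.domain ∧
  r.restrictClasses r₁.domain = r₁.classes ∧
  r.restrictClasses r₂.domain = r₂.classes

/-- `r` is the concatenation sum `r₁ · r₂` of the disjoint rankings `r₁` and `r₂`. -/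
def IsConcatSum [DecidableEq X] (r r₁ r₂ : CoalRanking X) : Prop :=
  Disjoint r₁.domain r₂.domain ∧ r.classes = r₁.classes ++ r₂.classes

/-- `r` is the top-aligned sum `r₁ ⊨ r₂` of the disjoint rankings `r₁` and `r₂`. -/
def IsTopAlignedSum [DecidableEq X] (r r₁ r₂ : CoalRanking X) : Prop :=
  Disjoint r₁.domain r₂.domain ∧ r.classes = zipUnion r₁.classes r₂.classes

/-- `r` is the bottom-aligned sum `r₁ ⫤ r₂` of the disjoint rankings `r₁` and `r₂`. -/
def IsBottomAlignedSum [DecidableEq X] (r r₁ r₂ : CoalRanking X) : Prop :=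
  Disjoint r₁.domain r₂.domain ∧
  r.classes = (zipUnion r₁.classes.reverse r₂.classes.reverse).reverse

/-- Renaming the individuals of a coalitional ranking by a permutation `σ` of `X`:
the ranking `≿^σ`. -/
def mapPerm [DecidableEq X] (σ : Equiv.Perm X) (r : CoalRanking X) : CoalRanking X where
  classes := r.classes.map (fun C => C.image (fun S => S.image σ))
  class_nonempty := by
    intro C hC
    simp only [List.mem_map] at hC
    obtain ⟨C₀, hC₀, rfl⟩ := hC
    exact (r.class_nonempty C₀ hC₀).image _
  coal_nonempty := by
    intro C hC S hS
    simp only [List.mem_map] at hC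
    obtain ⟨C₀, hC₀, rfl⟩ := hC
    simp only [Finset.mem_image] at hS
    obtain ⟨S₀, hS₀, rfl⟩ := hS
    exact (r.coal_nonempty C₀ hC₀ S₀ hS₀).image _
  classes_disjoint := by
    refine List.Pairwise.map _ (fun {A B} h => ?_) r.classes_disjoint
    exact (Finset.disjoint_image
      (Finset.image_injective σ.injective)).mpr h

/-- Renaming the coalitions of a coalitional ranking by a permutation `π` of the set of
coalitions (mapping nonempty sets to nonempty sets): the ranking `≿_π`. -/
def mapCoalPerm [DecidableEq X] (π : Equiv.Perm (Finset X))
    (hπ : ∀ S : Finset X, S.Nonempty → (π S).Nonempty) (r : CoalRanking X) :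
    CoalRanking X where
  classes := r.classes.map (fun C => C.image π)
  class_nonempty := by
    intro C hC
    simp only [List.mem_map] at hC
    obtain ⟨C₀, hC₀, rfl⟩ := hC
    exact (r.class_nonempty C₀ hC₀).image _
  coal_nonempty := by
    intro C hC S hS
    simp only [List.mem_map] at hC
    obtain ⟨C₀, hC₀, rfl⟩ := hC
    simp only [Finset.mem_image] at hS
    obtain ⟨S₀, hS₀, rfl⟩ := hS
    exact hπ S₀ (r.coal_nonempty C₀ hC₀ S₀ hS₀)
  classes_disjoint := by
    refine List.Pairwise.map _ (fun {A B} h => ?_) r.classes_disjoint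
    exact (Finset.disjoint_image π.injective).mpr h

end CoalRanking

open CoalRanking

variable {X : Type*}

/-- A social ranking solution: a map assigning to every coalitional ranking a binary
relation on the individuals. -/
abbrev SRSMap (X : Type*) := CoalRanking X → X → X → Prop

/-- The symmetric part `I` of the social ranking. -/
def Ind (R : SRSMap X) (r : CoalRanking X) (x y : X) : Prop := R r x y ∧ R r y x

/-- The asymmetric part `P` of the social ranking. -/
def Pref (R : SRSMap X) (r : CoalRanking X) (x y : X) : Prop := R r x y ∧ ¬ R r y x

/-- Conditions (1)-(4) of consistency for the triple `(r₁, r₂, r)`. -/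
def ConsistentAt (R : SRSMap X) (r₁ r₂ r : CoalRanking X) : Prop :=
  ∀ x y : X,
    (Ind R r₁ x y → Ind R r₂ x y → Ind R r x y) ∧
    (Ind R r₁ x y → Pref R r₂ x y → Pref R r x y) ∧
    (Pref R r₁ x y → Ind R r₂ x y → Pref R r x y) ∧
    (Pref R r₁ x y → Pref R r₂ x y → Pref R r x y)

/-- Consistency (CON). -/
def CON [DecidableEq X] (R : SRSMap X) : Prop :=
  ∀ r₁ r₂ r : CoalRanking X, IsSum r r₁ r₂ → ConsistentAt R r₁ r₂ r

/-- Concatenation consistency (CCON). -/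
def CCON [DecidableEq X] (R : SRSMap X) : Prop :=
  ∀ r₁ r₂ r : CoalRanking X, IsConcatSum r r₁ r₂ → ConsistentAt R r₁ r₂ r

/-- Top-aligned consistency (TCON). -/
def TCON [DecidableEq X] (R : SRSMap X) : Prop :=
  ∀ r₁ r₂ r : CoalRanking X, IsTopAlignedSum r r₁ r₂ → ConsistentAt R r₁ r₂ r

/-- Bottom-aligned consistency (BCON). -/
def BCON [DecidableEq X] (R : SRSMap X) : Prop :=
  ∀ r₁ r₂ r : CoalRanking X, IsBottomAlignedSum r r₁ r₂ → ConsistentAt R r₁ r₂ r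

/-- II-concatenation consistency. -/
def IICCON [DecidableEq X] (R : SRSMap X) : Prop :=
  ∀ r₁ r₂ r : CoalRanking X, IsConcatSum r r₁ r₂ →
    ∀ x y : X, Ind R r₁ x y → Ind R r₂ x y → Ind R r x y

/-- IP-concatenation consistency. -/
def IPCCON [DecidableEq X] (R : SRSMap X) : Prop :=
  ∀ r₁ r₂ r : CoalRanking X, IsConcatSum r r₁ r₂ →
    ∀ x y : X, Ind R r₁ x y → Pref R r₂ x y → Pref R r x y

/-- PI-concatenation consistency. -/
def PICCON [DecidableEq X] (R : SRSMap X) : Prop :=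
  ∀ r₁ r₂ r : CoalRanking X, IsConcatSum r r₁ r₂ →
    ∀ x y : X, Pref R r₁ x y → Ind R r₂ x y → Pref R r x y

/-- PP-concatenation consistency. -/
def PPCCON [DecidableEq X] (R : SRSMap X) : Prop :=
  ∀ r₁ r₂ r : CoalRanking X, IsConcatSum r r₁ r₂ →
    ∀ x y : X, Pref R r₁ x y → Pref R r₂ x y → Pref R r x y

/-- `x_k`: the number of coalitions of the class `C` containing `x`. -/
def cnt [DecidableEq X] (x : X) (C : Finset (Finset X)) : ℕ :=
  (C.filter (fun S => x ∈ S)).card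

/-- The vector `θ_≿(x) = (x₁, …, x_l)`. -/
def theta [DecidableEq X] (r : CoalRanking X) (x : X) : List ℕ :=
  r.classes.map (cnt x)

/-- `sign`: `1` on positive numbers, `0` otherwise. -/
def sgn (n : ℕ) : ℕ := if 0 < n then 1 else 0

/-- The vector `θ̇_≿(x) = (sign(x₁), …, sign(x_l))`. -/
def thetaDot [DecidableEq X] (r : CoalRanking X) (x : X) : List ℕ :=
  (theta r x).map sgn

/-- The lexicographic order `≥^L` on vectors (of equal length). -/
def lexGE : List ℕ → List ℕ → Prop
  | _, [] => True
  | [], _ :: _ => False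
  | a :: as, b :: bs => b < a ∨ (a = b ∧ lexGE as bs)

/-- The lexicographic excellence solution (lex-cel) `R^L`. -/
def lexcel [DecidableEq X] : SRSMap X := fun r x y => lexGE (theta r x) (theta r y)

/-- The sign lexicographic excellence solution (S lex-cel) `R^{SL}`. -/
def slexcel [DecidableEq X] : SRSMap X := fun r x y => lexGE (thetaDot r x) (thetaDot r y)

/-- The plurality solution `R^P`. -/
def plurality [DecidableEq X] : SRSMap X := fun r x y =>
  (theta r y).headD 0 ≤ (theta r x).headD 0

/-- The sign plurality solution `R^{SP}`. -/
def splurality [DecidableEq X] : SRSMap X := fun r x y =>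
  sgn ((theta r y).headD 0) ≤ sgn ((theta r x).headD 0)

/-- The anti-plurality solution `R^{AP}`. -/
def antiplurality [DecidableEq X] : SRSMap X := fun r x y =>
  (theta r x).getLastD 0 ≤ (theta r y).getLastD 0

/-- `e_≿(x)`: the largest `k` such that `x` belongs to every coalition of each of the
first `k` equivalence classes. -/
def eIIS [DecidableEq X] (r : CoalRanking X) (x : X) : ℕ :=
  (r.classes.takeWhile (fun C => decide (∀ S ∈ C, x ∈ S))).length

/-- The intersection initial segment solution (IIS) `R^{IIS}`. -/
def iis [DecidableEq X] : SRSMap X := fun r x y => eIIS r y ≤ eIIS r x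

/-- The index of the equivalence class a coalition belongs to. -/
def classIdx [DecidableEq X] (r : CoalRanking X) (S : Finset X) : ℕ :=
  r.classes.findIdx (fun C => decide (S ∈ C))

/-- `C_{xy}`: the number of CP comparisons in favour of `x` against `y`. -/
def cpCount [DecidableEq X] [Fintype X] (r : CoalRanking X) (x y : X) : ℕ :=
  ((Finset.univ : Finset (Finset X)).filter (fun S =>
    S.Nonempty ∧ x ∉ S ∧ y ∉ S ∧ insert x S ∈ r.domain ∧ insert y S ∈ r.domain ∧
    classIdx r (insert x S) < classIdx r (insert y S))).card

/-- The Ceteris Paribus majority solution `R^{CPM}`. -/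
def cpm [DecidableEq X] [Fintype X] : SRSMap X := fun r x y =>
  cpCount r y x ≤ cpCount r x y

/-- Neutrality (NT). -/
def NT [DecidableEq X] (R : SRSMap X) : Prop :=
  ∀ (σ : Equiv.Perm X) (r : CoalRanking X) (x y : X),
    R (r.mapPerm σ) (σ x) (σ y) ↔ R r x y

/-- Weak coalitional anonymity (WCA). -/
def WCA [DecidableEq X] (R : SRSMap X) : Prop :=
  ∀ (x y : X) (π : Equiv.Perm (Finset X))
    (hπ : ∀ S : Finset X, S.Nonempty → (π S).Nonempty),
    (∀ S : Finset X, x ∈ S → x ∈ π S) → (∀ S : Finset X, y ∈ S → y ∈ π S) →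
    ∀ r : CoalRanking X,
      (R (r.mapCoalPerm π hπ) x y ↔ R r x y) ∧ (R (r.mapCoalPerm π hπ) y x ↔ R r y x)

/-- The weak union very important person property (WUVIP). -/
def WUVIP (R : SRSMap X) : Prop :=
  ∀ (r : CoalRanking X) (A B : Finset (Finset X)), r.classes = [A, B] →
    ∀ x y : X, (∃ S ∈ A, x ∈ S) → (∀ S ∈ A, y ∉ S) → Pref R r x y

/-- All indifference all winners (AIAW). -/
def AIAW [DecidableEq X] (R : SRSMap X) : Prop :=
  ∀ r : CoalRanking X, r.classes.length ≤ 1 →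
    (∀ x y : X, (∃ S ∈ r.domain, x ∈ S) → (∃ S ∈ r.domain, y ∈ S) → Ind R r x y) ∧
    (∀ x z : X, (∃ S ∈ r.domain, x ∈ S) → (∀ S ∈ r.domain, z ∉ S) → Pref R r x z)

/-- Independence of the decomposition of the worst sets (IDWS). -/
def IDWS [DecidableEq X] (R : SRSMap X) : Prop :=
  ∀ (r r' : CoalRanking X) (L G : List (Finset (Finset X))) (W : Finset (Finset X)),
    L ≠ [] → r.classes = L ++ [W] → r'.classes = L ++ G →
    G.foldr (· ∪ ·) ∅ = W →
    ∀ x y : X, Pref R r x y → Pref R r' x y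

/-- Independence of the addition of the worst sets (IAWS). -/
def IAWS [DecidableEq X] (R : SRSMap X) : Prop :=
  ∀ (r r' : CoalRanking X) (G : Finset (Finset X)),
    r'.classes = r.classes ++ [G] → (∀ S ∈ G, S ∉ r.domain) →
    ∀ x y : X, Pref R r x y → Pref R r' x y

/-- Tops-only (TO). -/
def TO (R : SRSMap X) : Prop :=
  ∀ (r r' : CoalRanking X) (A : Finset (Finset X)),
    r.classes.head? = some A → r'.classes.head? = some A → R r = R r'

/-- The dual S lex-cel `R^{DSL}`. -/
def dslexcel [DecidableEq X] : SRSMap X := fun r x y =>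
  lexGE ((thetaDot r y).reverse) ((thetaDot r x).reverse)

/-- The inverse dual S lex-cel `R^{IDSL}`. -/
def idslexcel [DecidableEq X] : SRSMap X := fun r x y => dslexcel r y x

/-- The vector `θ̃_≿(x)` used by the S lex-cel with precedence on unanimity. -/
def tildeTheta [DecidableEq X] (r : CoalRanking X) (x : X) : List ℕ :=
  r.classes.map (fun C => if cnt x C = C.card then 2 else if 0 < cnt x C then 1 else 0)

/-- The S lex-cel with a particular precedence on unanimity `R^{SLUN}`. -/
def slun [DecidableEq X] : SRSMap X := fun r x y =>
  lexGE (tildeTheta r x) (tildeTheta r y)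

/-- The S sum score `Σ_k sign(x_k)`. -/
def ssum [DecidableEq X] (r : CoalRanking X) (x : X) : ℕ := (thetaDot r x).sum

/-- The S sum rule with tie-breaking by S lex-cel `R^{SSUM,SL}`. -/
def ssumSL [DecidableEq X] : SRSMap X := fun r x y =>
  ssum r y < ssum r x ∨ (ssum r x = ssum r y ∧ slexcel r x y)

end SocRank

open SocRank


section Aux
variable {α : Type*} [DecidableEq α]

lemma exists_perm_map' (n : ℕ) : ∀ (B B' : Finset α), B.card = n → B'.card = n →
    ∃ π : Equiv.Perm α, (∀ b ∈ B, π b ∈ B') ∧ (∀ a, a ∉ B → a ∉ B' → π a = a) := by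
  induction n with
  | zero =>
    intro B B' hB _
    exact ⟨1, by simp [Finset.card_eq_zero.mp hB], fun a _ _ => rfl⟩
  | succ n ih =>
    intro B B' hB hB'
    obtain ⟨b, hb⟩ := Finset.card_pos.mp (by omega : 0 < B.card)
    obtain ⟨b', hb'⟩ := Finset.card_pos.mp (by omega : 0 < B'.card)
    obtain ⟨π', h1, h2⟩ := ih (B.erase b) (B'.erase b')
      (by rw [Finset.card_erase_of_mem hb, hB]; rfl)
      (by rw [Finset.card_erase_of_mem hb', hB']; rfl)
    refine ⟨π'.trans (Equiv.swap b' (π' b)), ?_, ?_⟩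
    · intro c hc
      rcases eq_or_ne c b with rfl | hne
      · simpa [Equiv.trans_apply, Equiv.swap_apply_right] using hb'
      · have hc' : π' c ∈ (B'.erase b') := h1 c (Finset.mem_erase.mpr ⟨hne, hc⟩)
        have h3 : π' c ≠ b' := (Finset.mem_erase.mp hc').1
        have h4 : π' c ≠ π' b := fun h => hne (π'.injective h)
        simpa [Equiv.trans_apply, Equiv.swap_apply_of_ne_of_ne h3 h4] using
          (Finset.mem_erase.mp hc').2
    · intro a ha ha'
      have h2a : π' a = a :=
        h2 a (fun h => ha (Finset.mem_of_mem_erase h)) (fun h => ha' (Finset.mem_of_mem_erase h))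
      have hne1 : a ≠ b' := fun h => ha' (h ▸ hb')
      have hne2 : a ≠ π' b := fun h => ha (by rw [show a = b from π'.injective (h2a.trans h)]; exact hb)
      simp [Equiv.trans_apply, h2a, Equiv.swap_apply_of_ne_of_ne hne1 hne2]

lemma perm_mem_of_fix {π : Equiv.Perm α} {B B' : Finset α}
    (h2 : ∀ a, a ∉ B → a ∉ B' → π a = a) {a : α} (ha : a ∈ B ∪ B') : π a ∈ B ∪ B' := by
  by_contra h
  have hfix : π (π a) = π a :=
    h2 (π a) (fun hh => h (Finset.mem_union_left _ hh)) (fun hh => h (Finset.mem_union_right _ hh))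
  exact h ((π.injective hfix).symm ▸ ha)

lemma exists_sig_perm {κ : Type*} [DecidableEq κ] (sig : α → κ) :
    ∀ (ks : List κ) (A A' : Finset α),
    (∀ a ∈ A, sig a ∈ ks) → (∀ a ∈ A', sig a ∈ ks) →
    (∀ k ∈ ks, (A.filter (fun a => sig a = k)).card = (A'.filter (fun a => sig a = k)).card) →
    ∃ π : Equiv.Perm α, (∀ a, sig (π a) = sig a) ∧ (∀ a ∈ A, π a ∈ A') ∧
      (∀ a, a ∉ A → a ∉ A' → π a = a) := by
  intro ks
  induction ks with
  | nil =>
    intro A A' hsA _ _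
    exact ⟨1, fun a => rfl, fun a ha => absurd (hsA a ha) (by simp), fun a _ _ => rfl⟩
  | cons k ks ih =>
    intro A A' hsA hsA' hcard
    set B := A.filter (fun a => sig a = k) with hBdef
    set B' := A'.filter (fun a => sig a = k) with hB'def
    obtain ⟨πk, hk1, hk2⟩ := exists_perm_map' B.card B B' rfl (hcard k (by simp)).symm
    set A₁ := A.filter (fun a => sig a ≠ k) with hA₁def
    set A'₁ := A'.filter (fun a => sig a ≠ k) with hA'₁def
    obtain ⟨π', hs', h1', h2'⟩ := ih A₁ A'₁
      (fun a ha => by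
        have := hsA a (Finset.mem_filter.mp ha).1
        have h2 := (Finset.mem_filter.mp ha).2
        simp only [List.mem_cons] at this; tauto)
      (fun a ha => by
        have := hsA' a (Finset.mem_filter.mp ha).1
        have h2 := (Finset.mem_filter.mp ha).2
        simp only [List.mem_cons] at this; tauto)
      (fun k' hk' => by
        by_cases hkk : k' = k
        · subst hkk
          simp [hA₁def, hA'₁def, Finset.filter_filter]
        · have := hcard k' (by simp [hk'])
          rw [hA₁def, hA'₁def, Finset.filter_filter, Finset.filter_filter]
          have e1 : ∀ (T : Finset α), (T.filter (fun a => sig a ≠ k ∧ sig a = k')).card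
              = (T.filter (fun a => sig a = k')).card := by
            intro T
            congr 1
            apply Finset.filter_congr
            intro a _
            constructor
            · exact fun h => h.2
            · exact fun h => ⟨by rw [h]; exact hkk, h⟩
          rw [e1, e1]; exact this)
    -- sig preservation for πk
    have hsigk : ∀ a, sig (πk a) = sig a := by
      intro a
      by_cases ha : a ∈ B ∪ B'
      · have h1 := perm_mem_of_fix hk2 ha
        have e : ∀ c ∈ B ∪ B', sig c = k := by
          intro c hc
          rcases Finset.mem_union.mp hc with hc | hc
          · exact (Finset.mem_filter.mp hc).2
          · exact (Finset.mem_filter.mp hc).2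
        rw [e _ h1, e _ ha]
      · rw [hk2 a (fun h => ha (Finset.mem_union_left _ h))
          (fun h => ha (Finset.mem_union_right _ h))]
    refine ⟨πk.trans π', ?_, ?_, ?_⟩
    · intro a
      simp only [Equiv.trans_apply, hs', hsigk]
    · intro a ha
      by_cases hsk : sig a = k
      · have hab : a ∈ B := Finset.mem_filter.mpr ⟨ha, hsk⟩
        have h1 : πk a ∈ B' := hk1 a hab
        have hsig1 : sig (πk a) = k := (Finset.mem_filter.mp h1).2
        have hfix : π' (πk a) = πk a := by
          apply h2'
          · intro hmem
            exact (Finset.mem_filter.mp hmem).2 hsig1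
          · intro hmem
            exact (Finset.mem_filter.mp hmem).2 hsig1
        simp only [Equiv.trans_apply, hfix]
        exact (Finset.mem_filter.mp h1).1
      · have hfixk : πk a = a := by
          apply hk2
          · intro hmem; exact hsk (Finset.mem_filter.mp hmem).2
          · intro hmem; exact hsk (Finset.mem_filter.mp hmem).2
        have : π' a ∈ A'₁ := h1' a (Finset.mem_filter.mpr ⟨ha, hsk⟩)
        simp only [Equiv.trans_apply, hfixk]
        exact (Finset.mem_filter.mp this).1
    · intro a ha ha'
      have hfixk : πk a = a := by
        apply hk2
        · intro hmem; exact ha (Finset.mem_filter.mp hmem).1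
        · intro hmem; exact ha' (Finset.mem_filter.mp hmem).1
      have hfix' : π' a = a := by
        apply h2'
        · intro hmem; exact ha (Finset.mem_filter.mp hmem).1
        · intro hmem; exact ha' (Finset.mem_filter.mp hmem).1
      simp only [Equiv.trans_apply, hfixk, hfix']

end Aux

section PluralityAux2
open SocRank
variable {X : Type*} [DecidableEq X]

lemma CoalRanking.ext' {r r' : CoalRanking X} (h : r.classes = r'.classes) : r = r' := by
  cases r; cases r'; simp only at h; subst h; rfl

/-- Single-class coalitional ranking. -/
def CoalRanking.single (A : Finset (Finset X)) (hAne : A.Nonempty)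
    (hA : ∀ S ∈ A, S.Nonempty) : CoalRanking X :=
  ⟨[A], by simpa using hAne, by simpa using hA, by simp⟩

@[simp] lemma single_classes (A : Finset (Finset X)) (hAne hA) :
    (CoalRanking.single A hAne hA).classes = [A] := rfl

lemma domain_single (A : Finset (Finset X)) (hAne hA) :
    (CoalRanking.single A hAne hA).domain = A := by
  simp [CoalRanking.domain, CoalRanking.single]

lemma theta_single (A : Finset (Finset X)) (hAne hA) (z : X) :
    theta (CoalRanking.single A hAne hA) z = [cnt z A] := rfl

lemma mem_image_perm (σ : Equiv.Perm X) (S : Finset X) (a : X) :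
    a ∈ S.image σ ↔ σ.symm a ∈ S := by
  constructor
  · rintro h
    obtain ⟨b, hb, rfl⟩ := Finset.mem_image.mp h
    simpa using hb
  · intro h
    have := Finset.mem_image_of_mem σ h
    simpa using this

lemma cnt_image_perm (σ : Equiv.Perm X) (A : Finset (Finset X)) (z : X) :
    cnt (σ z) (A.image (fun S => S.image σ)) = cnt z A := by
  unfold cnt
  rw [Finset.filter_image]
  rw [Finset.card_image_of_injective _ (Finset.image_injective σ.injective)]
  congr 1
  apply Finset.filter_congr
  intro S _
  rw [mem_image_perm]
  simp

lemma cnt_split (x y : X) (A : Finset (Finset X)) :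
    cnt x A = (A.filter (fun S => x ∈ S ∧ y ∈ S)).card
      + (A.filter (fun S => x ∈ S ∧ y ∉ S)).card := by
  unfold cnt
  rw [← Finset.card_filter_add_card_filter_not (s := A.filter (fun S => x ∈ S))
    (fun S => y ∈ S), Finset.filter_filter, Finset.filter_filter]

lemma exists_coal_perm (x y : X) (A : Finset (Finset X))
    (hcnt : cnt x A = cnt y A) :
    ∃ π : Equiv.Perm (Finset X),
      (∀ S : Finset X, (x ∈ π S ↔ x ∈ S)) ∧ (∀ S : Finset X, (y ∈ π S ↔ y ∈ S)) ∧
      (∀ S : Finset X, S ∉ A → S ∉ A.image (fun S => S.image (Equiv.swap x y)) → π S = S) ∧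
      A.image π = A.image (fun S => S.image (Equiv.swap x y)) := by
  classical
  set σ : Equiv.Perm X := Equiv.swap x y with hσ
  set ι : Finset X → Finset X := fun S => S.image σ with hι
  have hιinj : Function.Injective ι := Finset.image_injective σ.injective
  set A' : Finset (Finset X) := A.image ι with hA'
  set sig : Finset X → Bool × Bool := fun S => (decide (x ∈ S), decide (y ∈ S)) with hsig
  have hsigι : ∀ S : Finset X, sig (ι S) = (decide (y ∈ S), decide (x ∈ S)) := by
    intro S
    have hx : x ∈ ι S ↔ y ∈ S := by
      rw [hι, mem_image_perm]; simp [hσ]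
    have hy : y ∈ ι S ↔ x ∈ S := by
      rw [hι, mem_image_perm]; simp [hσ]
    simp only [hsig, Prod.mk.injEq]
    rw [show decide (x ∈ ι S) = decide (y ∈ S) by simp [hx],
        show decide (y ∈ ι S) = decide (x ∈ S) by simp [hy]]
    exact ⟨rfl, rfl⟩
  have hcard' : ∀ k : Bool × Bool,
      (A'.filter (fun S => sig S = k)).card = (A.filter (fun S => sig (ι S) = k)).card := by
    intro k
    rw [hA', Finset.filter_image, Finset.card_image_of_injective _ hιinj]
  have hswap : (A.filter (fun S => x ∈ S ∧ y ∉ S)).card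
      = (A.filter (fun S => y ∈ S ∧ x ∉ S)).card := by
    have h1 := cnt_split x y A
    have h2 := cnt_split y x A
    have h3 : (A.filter (fun S => y ∈ S ∧ x ∈ S)).card
        = (A.filter (fun S => x ∈ S ∧ y ∈ S)).card := by
      congr 1
      apply Finset.filter_congr
      intro S _
      simp [and_comm]
    omega
  obtain ⟨π, hsp, hmapsto, hfix⟩ := exists_sig_perm sig
    [(true, true), (true, false), (false, true), (false, false)] A A'
    (by
      intro a _
      cases hxa : decide (x ∈ a) <;> cases hya : decide (y ∈ a) <;>
        simp [hsig, hxa, hya])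
    (by
      intro a _
      cases hxa : decide (x ∈ a) <;> cases hya : decide (y ∈ a) <;>
        simp [hsig, hxa, hya])
    (by
      intro k _
      rw [hcard' k]
      have hfc : ∀ (b c : Bool), (A.filter (fun S => sig (ι S) = (b, c)))
          = (A.filter (fun S => sig S = (c, b))) := by
        intro b c
        apply Finset.filter_congr
        intro S _
        rw [hsigι S]
        simp only [hsig, Prod.mk.injEq]
        tauto
      obtain ⟨b, c⟩ := k
      rw [hfc b c]
      rcases b <;> rcases c
      · rfl
      · -- k = (false, true): LHS filter sig = (false,true) means x∉, y∈; RHS sig = (true,false)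
        have e1 : (A.filter (fun S => sig S = (false, true)))
            = A.filter (fun S => y ∈ S ∧ x ∉ S) := by
          apply Finset.filter_congr; intro S _
          simp [hsig, Prod.mk.injEq, and_comm]
        have e2 : (A.filter (fun S => sig S = (true, false)))
            = A.filter (fun S => x ∈ S ∧ y ∉ S) := by
          apply Finset.filter_congr; intro S _
          simp [hsig, Prod.mk.injEq]
        rw [e1, e2, hswap]
      · have e1 : (A.filter (fun S => sig S = (true, false)))
            = A.filter (fun S => x ∈ S ∧ y ∉ S) := by
          apply Finset.filter_congr; intro S _
          simp [hsig, Prod.mk.injEq]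
        have e2 : (A.filter (fun S => sig S = (false, true)))
            = A.filter (fun S => y ∈ S ∧ x ∉ S) := by
          apply Finset.filter_congr; intro S _
          simp [hsig, Prod.mk.injEq, and_comm]
        rw [e1, e2, hswap]
      · rfl)
  have hxmem : ∀ S : Finset X, x ∈ π S ↔ x ∈ S := by
    intro S
    have := hsp S
    simp only [hsig, Prod.mk.injEq] at this
    have := this.1
    constructor
    · intro h; have := (decide_eq_decide).mp this; tauto
    · intro h; have := (decide_eq_decide).mp this; tauto
  have hymem : ∀ S : Finset X, y ∈ π S ↔ y ∈ S := by
    intro S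
    have := hsp S
    simp only [hsig, Prod.mk.injEq] at this
    have := this.2
    constructor
    · intro h; have := (decide_eq_decide).mp this; tauto
    · intro h; have := (decide_eq_decide).mp this; tauto
  refine ⟨π, hxmem, hymem, fun S h1 h2 => hfix S h1 h2, ?_⟩
  apply Finset.eq_of_subset_of_card_le
  · intro T hT
    obtain ⟨S, hS, rfl⟩ := Finset.mem_image.mp hT
    exact hmapsto S hS
  · rw [Finset.card_image_of_injective _ hιinj, Finset.card_image_of_injective _ π.injective]

end PluralityAux2

section PluralityAux3
open SocRank
variable {X : Type*} [DecidableEq X]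

lemma cnt_union (z : X) {A B : Finset (Finset X)} (h : Disjoint A B) :
    cnt z (A ∪ B) = cnt z A + cnt z B := by
  unfold cnt
  rw [Finset.filter_union, Finset.card_union_of_disjoint
    (Finset.disjoint_filter_filter h)]

lemma ind_of_cnt_eq (R : SRSMap X) (hNT : NT R) (hWCA : WCA R)
    (hcomp : ∀ (r : CoalRanking X) (x y : X), R r x y ∨ R r y x)
    (A : Finset (Finset X)) (hAne : A.Nonempty) (hA : ∀ S ∈ A, S.Nonempty)
    (x y : X) (hcnt : cnt x A = cnt y A) :
    Ind R (CoalRanking.single A hAne hA) x y := by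
  obtain ⟨π, hx, hy, hfix, himg⟩ := exists_coal_perm x y A hcnt
  set rA := CoalRanking.single A hAne hA with hrA
  set A' := A.image (fun S => S.image (Equiv.swap x y)) with hA'
  have hπ : ∀ S : Finset X, S.Nonempty → (π S).Nonempty := by
    intro S hS
    by_cases hmem : S ∈ A ∪ A'
    · have hreg : π S ∈ A ∪ A' := perm_mem_of_fix
        (fun a ha ha' => hfix a ha ha') hmem
      rcases Finset.mem_union.mp hreg with hin | hin
      · exact hA _ hin
      · obtain ⟨T, hT, hTe⟩ := Finset.mem_image.mp hin
        rw [← hTe]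
        exact (hA T hT).image _
    · rw [hfix S (fun hh => hmem (Finset.mem_union_left _ hh))
        (fun hh => hmem (Finset.mem_union_right _ hh))]
      exact hS
  have heqr : rA.mapCoalPerm π hπ = rA.mapPerm (Equiv.swap x y) :=
    CoalRanking.ext' (by
      show [A.image π] = [A.image (fun S => S.image (Equiv.swap x y))]
      rw [himg])
  have hwca := hWCA x y π hπ (fun S h => (hx S).mpr h) (fun S h => (hy S).mpr h) rA
  have h1 : R (rA.mapPerm (Equiv.swap x y)) x y ↔ R rA x y := heqr ▸ hwca.1
  have h4 := hNT (Equiv.swap x y) rA y x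
  rw [Equiv.swap_apply_left, Equiv.swap_apply_right] at h4
  have hsym : R rA x y ↔ R rA y x := h1.symm.trans h4
  rcases hcomp rA x y with hc | hc
  · exact ⟨hc, hsym.mp hc⟩
  · exact ⟨hsym.mpr hc, hc⟩

lemma pref_of_top (R : SRSMap X) (hWUVIP : WUVIP R) (hTO : TO R)
    (A : Finset (Finset X)) (hAne : A.Nonempty) (hA : ∀ S ∈ A, S.Nonempty)
    (x y : X) (hx : ∃ S ∈ A, x ∈ S) (hy : ∀ S ∈ A, y ∉ S) :
    Pref R (CoalRanking.single A hAne hA) x y := by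
  have hyA : ({y} : Finset X) ∉ A := fun h => hy _ h (Finset.mem_singleton_self y)
  let r2 : CoalRanking X :=
    ⟨[A, {({y} : Finset X)}],
      by
        intro C hC
        simp only [List.mem_cons, List.mem_singleton, List.not_mem_nil, or_false] at hC
        rcases hC with rfl | rfl
        · exact hAne
        · exact Finset.singleton_nonempty _,
      by
        intro C hC S hS
        simp only [List.mem_cons, List.mem_singleton, List.not_mem_nil, or_false] at hC
        rcases hC with rfl | rfl
        · exact hA S hS
        · rw [Finset.mem_singleton.mp hS]; exact Finset.singleton_nonempty _,
      by
        refine List.Pairwise.cons ?_ (List.pairwise_singleton _ _)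
        intro b hb
        rw [List.mem_singleton.mp hb]
        exact Finset.disjoint_singleton_right.mpr hyA⟩
  have hpref := hWUVIP r2 A ({({y} : Finset X)}) rfl x y hx hy
  have hRR : R (CoalRanking.single A hAne hA) = R r2 := hTO _ r2 A rfl rfl
  unfold Pref at hpref ⊢
  rw [hRR]
  exact hpref

lemma pref_of_cnt_lt (R : SRSMap X) (hNT : NT R) (hWCA : WCA R) (hWUVIP : WUVIP R)
    (hTCON : TCON R) (hTO : TO R)
    (hcomp : ∀ (r : CoalRanking X) (x y : X), R r x y ∨ R r y x)
    (A : Finset (Finset X)) (hAne : A.Nonempty) (hA : ∀ S ∈ A, S.Nonempty)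
    (x y : X) (h : cnt y A < cnt x A) :
    Pref R (CoalRanking.single A hAne hA) x y := by
  by_cases hy0 : ∀ S ∈ A, y ∉ S
  · apply pref_of_top R hWUVIP hTO A hAne hA x y ?_ hy0
    have hpos : 0 < cnt x A := lt_of_le_of_lt (Nat.zero_le _) h
    obtain ⟨S, hS⟩ := Finset.card_pos.mp hpos
    exact ⟨S, (Finset.mem_filter.mp hS).1, (Finset.mem_filter.mp hS).2⟩
  · push_neg at hy0
    obtain ⟨S₀, hS₀A, hS₀y⟩ := hy0
    set n1 := (A.filter (fun S => x ∈ S ∧ y ∈ S)).card with hn1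
    set nx := (A.filter (fun S => x ∈ S ∧ y ∉ S)).card with hnx
    set ny := (A.filter (fun S => y ∈ S ∧ x ∉ S)).card with hny
    have hx1 : cnt x A = n1 + nx := cnt_split x y A
    have hy1 : cnt y A = n1 + ny := by
      rw [cnt_split y x A, hn1, hny]
      congr 2
      apply Finset.filter_congr
      intro S _
      simp [and_comm]
    obtain ⟨A₁, hA₁sub, hA₁card⟩ := Finset.exists_subset_card_eq
      (show nx - ny ≤ (A.filter (fun S => x ∈ S ∧ y ∉ S)).card by omega)
    have hA₁A : A₁ ⊆ A := hA₁sub.trans (Finset.filter_subset _ _)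
    set A₂ := A \ A₁ with hA₂def
    have hA₁ne : A₁.Nonempty := Finset.card_pos.mp (by omega)
    have hA₂ne : A₂.Nonempty := ⟨S₀, Finset.mem_sdiff.mpr ⟨hS₀A, fun hmem =>
      (Finset.mem_filter.mp (hA₁sub hmem)).2.2 hS₀y⟩⟩
    have hdisj : Disjoint A₁ A₂ := Finset.disjoint_sdiff
    have hAunion : A₁ ∪ A₂ = A := Finset.union_sdiff_of_subset hA₁A
    have hsx : cnt x A₁ + cnt x A₂ = cnt x A := by rw [← cnt_union x hdisj, hAunion]
    have hsy : cnt y A₁ + cnt y A₂ = cnt y A := by rw [← cnt_union y hdisj, hAunion]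
    have hcx1 : cnt x A₁ = nx - ny := by
      rw [← hA₁card]
      unfold cnt
      congr 1
      apply Finset.filter_true_of_mem
      intro S hS
      exact (Finset.mem_filter.mp (hA₁sub hS)).2.1
    have hcy1 : cnt y A₁ = 0 := by
      unfold cnt
      rw [Finset.card_eq_zero, Finset.filter_eq_empty_iff]
      intro S hS
      exact (Finset.mem_filter.mp (hA₁sub hS)).2.2
    have hkey : cnt x A₂ = cnt y A₂ := by omega
    have hA₁coal : ∀ S ∈ A₁, S.Nonempty := fun S hS => hA S (hA₁A hS)
    have hA₂coal : ∀ S ∈ A₂, S.Nonempty := fun S hS => hA S (Finset.mem_sdiff.mp hS).1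
    have hsum : CoalRanking.IsTopAlignedSum (CoalRanking.single A hAne hA)
        (CoalRanking.single A₁ hA₁ne hA₁coal) (CoalRanking.single A₂ hA₂ne hA₂coal) := by
      constructor
      · rw [domain_single, domain_single]
        exact hdisj
      · show [A] = CoalRanking.zipUnion [A₁] [A₂]
        show [A] = [A₁ ∪ A₂]
        rw [hAunion]
    have hp1 : Pref R (CoalRanking.single A₁ hA₁ne hA₁coal) x y := by
      apply pref_of_top R hWUVIP hTO A₁ hA₁ne hA₁coal x y
      · obtain ⟨S, hS⟩ := hA₁ne
        exact ⟨S, hS, (Finset.mem_filter.mp (hA₁sub hS)).2.1⟩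
      · intro S hS
        exact (Finset.mem_filter.mp (hA₁sub hS)).2.2
    have hp2 : Ind R (CoalRanking.single A₂ hA₂ne hA₂coal) x y :=
      ind_of_cnt_eq R hNT hWCA hcomp A₂ hA₂ne hA₂coal x y hkey
    exact ((hTCON _ _ _ hsum x y).2.2.1) hp1 hp2

end PluralityAux3

section PluralityAux4
open SocRank
variable {X : Type*} [DecidableEq X]

lemma theta_headD_nil {r : CoalRanking X} (h : r.classes = []) (z : X) :
    (theta r z).headD 0 = 0 := by simp [theta, h]

lemma theta_headD_cons {r : CoalRanking X} {A : Finset (Finset X)}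
    {L : List (Finset (Finset X))} (h : r.classes = A :: L) (z : X) :
    (theta r z).headD 0 = cnt z A := by simp [theta, h]

lemma plurality_iff {r : CoalRanking X} {A : Finset (Finset X)}
    {L : List (Finset (Finset X))} (h : r.classes = A :: L) (x y : X) :
    plurality r x y ↔ cnt y A ≤ cnt x A := by
  unfold plurality
  rw [theta_headD_cons h, theta_headD_cons h]

lemma plurality_NT : NT (plurality (X := X)) := by
  intro σ r x y
  unfold plurality
  cases hc : r.classes with
  | nil =>
    have h2 : (r.mapPerm σ).classes = [] := by simp [CoalRanking.mapPerm, hc]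
    rw [theta_headD_nil h2, theta_headD_nil h2, theta_headD_nil hc, theta_headD_nil hc]
  | cons A L =>
    have h2 : (r.mapPerm σ).classes = (A.image (fun S => S.image σ))
        :: L.map (fun C => C.image (fun S => S.image σ)) := by
      simp [CoalRanking.mapPerm, hc]
    rw [theta_headD_cons h2, theta_headD_cons h2, theta_headD_cons hc, theta_headD_cons hc,
      cnt_image_perm, cnt_image_perm]

lemma mem_perm_iff [Fintype X] (π : Equiv.Perm (Finset X)) (z : X)
    (hz : ∀ S, z ∈ S → z ∈ π S) : ∀ S, z ∈ π S ↔ z ∈ S := by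
  have hU : (Finset.univ.filter (fun S : Finset X => z ∈ S)).image π
      = Finset.univ.filter (fun S : Finset X => z ∈ S) := by
    apply Finset.eq_of_subset_of_card_le
    · intro T hT
      obtain ⟨S, hS, rfl⟩ := Finset.mem_image.mp hT
      exact Finset.mem_filter.mpr ⟨Finset.mem_univ _, hz S (Finset.mem_filter.mp hS).2⟩
    · rw [Finset.card_image_of_injective _ π.injective]
  intro S
  refine ⟨fun h => ?_, hz S⟩
  have hmem : π S ∈ (Finset.univ.filter (fun S : Finset X => z ∈ S)).image π := by
    rw [hU]; exact Finset.mem_filter.mpr ⟨Finset.mem_univ _, h⟩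
  obtain ⟨T, hT, hTe⟩ := Finset.mem_image.mp hmem
  rw [← π.injective hTe]
  exact (Finset.mem_filter.mp hT).2

lemma cnt_image_coalperm (π : Equiv.Perm (Finset X)) (z : X)
    (hz : ∀ S, z ∈ π S ↔ z ∈ S) (A : Finset (Finset X)) :
    cnt z (A.image π) = cnt z A := by
  unfold cnt
  rw [Finset.filter_image, Finset.card_image_of_injective _ π.injective]
  congr 1
  apply Finset.filter_congr
  intro S _
  simp [hz S]

lemma plurality_WCA [Fintype X] : WCA (plurality (X := X)) := by
  intro x y π hπ hx hy r
  have hx' := mem_perm_iff π x hx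
  have hy' := mem_perm_iff π y hy
  have key : ∀ z : X, (∀ S, z ∈ π S ↔ z ∈ S) →
      (theta (r.mapCoalPerm π hπ) z).headD 0 = (theta r z).headD 0 := by
    intro z hz
    cases hc : r.classes with
    | nil =>
      rw [theta_headD_nil (show (r.mapCoalPerm π hπ).classes = [] by
        simp [CoalRanking.mapCoalPerm, hc]), theta_headD_nil hc]
    | cons A L =>
      rw [theta_headD_cons (show (r.mapCoalPerm π hπ).classes
          = (A.image π) :: L.map (fun C => C.image π) by
        simp [CoalRanking.mapCoalPerm, hc]),
        theta_headD_cons hc, cnt_image_coalperm π z hz A]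
  constructor <;> (unfold plurality; rw [key x hx', key y hy'])

lemma plurality_WUVIP : WUVIP (plurality (X := X)) := by
  intro r A B hcls x y hx hy
  have hhx : 0 < cnt x A := by
    obtain ⟨S, hS, hxS⟩ := hx
    exact Finset.card_pos.mpr ⟨S, Finset.mem_filter.mpr ⟨hS, hxS⟩⟩
  have hhy : cnt y A = 0 := by
    unfold cnt
    rw [Finset.card_eq_zero, Finset.filter_eq_empty_iff]
    exact fun S hS => hy S hS
  constructor
  · rw [plurality_iff hcls]; omega
  · rw [plurality_iff hcls]; omega

lemma subset_foldr : ∀ (l : List (Finset (Finset X))) (C : Finset (Finset X)),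
    C ∈ l → C ⊆ l.foldr (· ∪ ·) ∅ := by
  intro l
  induction l with
  | nil => intro C h; exact absurd h List.not_mem_nil
  | cons D l ih =>
    intro C h
    rcases List.mem_cons.mp h with rfl | h'
    · exact Finset.subset_union_left
    · exact (ih C h').trans Finset.subset_union_right

lemma class_subset_domain {r : CoalRanking X} {C : Finset (Finset X)}
    (h : C ∈ r.classes) : C ⊆ r.domain :=
  subset_foldr r.classes C h

lemma plurality_TCON : TCON (plurality (X := X)) := by
  intro r₁ r₂ r hsum x y
  obtain ⟨hdisj, hcls⟩ := hsum
  have key : ∀ z : X, (theta r z).headD 0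
      = (theta r₁ z).headD 0 + (theta r₂ z).headD 0 := by
    intro z
    cases h1 : r₁.classes with
    | nil =>
      cases h2 : r₂.classes with
      | nil =>
        rw [h1, h2] at hcls
        rw [theta_headD_nil hcls, theta_headD_nil h1, theta_headD_nil h2]
      | cons B M =>
        rw [h1, h2] at hcls
        rw [theta_headD_cons hcls, theta_headD_nil h1, theta_headD_cons h2]
        omega
    | cons A L =>
      cases h2 : r₂.classes with
      | nil =>
        rw [h1, h2] at hcls
        rw [theta_headD_cons hcls, theta_headD_cons h1, theta_headD_nil h2]
        omega
      | cons B M =>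
        rw [h1, h2] at hcls
        have hAB : Disjoint A B := by
          have hA : A ⊆ r₁.domain := class_subset_domain (by rw [h1]; exact List.mem_cons_self)
          have hB : B ⊆ r₂.domain := class_subset_domain (by rw [h2]; exact List.mem_cons_self)
          exact Finset.disjoint_of_subset_left hA (Finset.disjoint_of_subset_right hB hdisj)
        have : r.classes = (A ∪ B) :: CoalRanking.zipUnion L M := hcls
        rw [theta_headD_cons this, theta_headD_cons h1, theta_headD_cons h2, cnt_union z hAB]
  have kx := key x
  have ky := key y
  unfold Ind Pref plurality at *
  rw [kx, ky]
  omega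

lemma plurality_TO : TO (plurality (X := X)) := by
  intro r r' A h h'
  have e : ∀ (s : CoalRanking X), s.classes.head? = some A →
      ∀ z : X, (theta s z).headD 0 = cnt z A := by
    intro s hs z
    cases hc : s.classes with
    | nil => rw [hc] at hs; simp at hs
    | cons B L =>
      rw [hc] at hs
      simp only [List.head?_cons, Option.some.injEq] at hs
      rw [theta_headD_cons hc, hs]
  funext x y
  unfold plurality
  rw [e r h x, e r h y, e r' h' x, e r' h' y]

end PluralityAux4

/-- an SRS satisfies NT, WCA, WUVIP, TCON and TO iff it is plurality. -/
theorem plurality_characterization {X : Type*} [DecidableEq X] [Fintype X]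
    (hX : 3 ≤ Fintype.card X) (R : SRSMap X)
    (hrefl : ∀ (r : CoalRanking X) (x : X), R r x x)
    (hcomp : ∀ (r : CoalRanking X) (x y : X), R r x y ∨ R r y x) :
    (NT R ∧ WCA R ∧ WUVIP R ∧ TCON R ∧ TO R) ↔ R = plurality := by
  constructor
  · rintro ⟨hNT, hWCA, hWUVIP, hTCON, hTO⟩
    funext r x y
    apply propext
    cases hc : r.classes with
    | nil =>
      have hr : r.mapPerm (Equiv.swap x y) = r :=
        CoalRanking.ext' (by simp [CoalRanking.mapPerm, hc])
      have h3 := hNT (Equiv.swap x y) r y x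
      rw [Equiv.swap_apply_left, Equiv.swap_apply_right, hr] at h3
      have hR : R r x y := by
        rcases hcomp r x y with h | h
        · exact h
        · exact h3.mpr h
      constructor
      · intro _
        unfold plurality
        rw [theta_headD_nil hc, theta_headD_nil hc]
      · intro _
        exact hR
    | cons A L =>
      have hAmem : A ∈ r.classes := by rw [hc]; exact List.mem_cons_self
      have hAne := r.class_nonempty A hAmem
      have hA := r.coal_nonempty A hAmem
      have hRr : R r = R (CoalRanking.single A hAne hA) :=
        hTO r (CoalRanking.single A hAne hA) A (by rw [hc]; rfl) rfl
      rw [plurality_iff hc x y, hRr]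
      constructor
      · intro hR
        by_contra hlt
        push_neg at hlt
        exact (pref_of_cnt_lt R hNT hWCA hWUVIP hTCON hTO hcomp A hAne hA y x hlt).2 hR
      · intro hle
        rcases lt_or_eq_of_le hle with hlt | heq
        · exact (pref_of_cnt_lt R hNT hWCA hWUVIP hTCON hTO hcomp A hAne hA x y hlt).1
        · exact (ind_of_cnt_eq R hNT hWCA hcomp A hAne hA x y heq.symm).1
  · rintro rfl
    exact ⟨plurality_NT, plurality_WCA, plurality_WUVIP, plurality_TCON, plurality_TO⟩
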